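/- Let m₂ < m₁ be nonnegative integers with n = m₁+m₂+1 and f(x) = x^{n+1} = x^{m₁+m₂+2} on an interval containing 0 < a < b. With P, Q the Hermite interpolants of degree ≤ n as in the standard setup (P matches f to order m₁ at a and order m₂ at b; Q matches to order m₂ at a and order m₁ at b), the unique solution x₀ ∈ (a,b) of (f - P)(x) = (-1)^{m₁-m₂}(f - Q)(x) is x₀ = (a+b)/2. -/
import Mathlib

open Polynomial

lemma iterDeriv_poly (p : Polynomial ℝ) (j : ℕ) :
    iteratedDeriv j (fun t => p.eval t) = fun t => (derivative^[j] p).eval t := by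
  induction j generalizing p with
  | zero => simp
  | succ n ih =>
    rw [iteratedDeriv_succ', Function.iterate_succ_apply]
    rw [show deriv (fun t => p.eval t) = fun t => p.derivative.eval t from
      funext fun x => Polynomial.deriv p]
    exact ih _

lemma hermite_unique (c d : ℝ) (hcd : c ≠ d) (r s : ℕ) (D : Polynomial ℝ)
    (hdeg : D.natDegree ≤ r + s + 1)
    (hc : ∀ j ≤ r, (derivative^[j] D).eval c = 0)
    (hd : ∀ j ≤ s, (derivative^[j] D).eval d = 0) : D = 0 := by
  by_contra hD
  have h1 : r < D.rootMultiplicity c :=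
    (lt_rootMultiplicity_iff_isRoot_iterate_derivative hD).2 fun m hm => hc m hm
  have h2 : s < D.rootMultiplicity d :=
    (lt_rootMultiplicity_iff_isRoot_iterate_derivative hD).2 fun m hm => hd m hm
  have d1 : (X - C c) ^ (r + 1) ∣ D := by
    refine dvd_trans (pow_dvd_pow _ h1) (D.pow_rootMultiplicity_dvd c)
  have d2 : (X - C d) ^ (s + 1) ∣ D := by
    refine dvd_trans (pow_dvd_pow _ h2) (D.pow_rootMultiplicity_dvd d)
  have hcop : IsCoprime ((X - C c) ^ (r + 1)) ((X - C d) ^ (s + 1)) :=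
    (isCoprime_X_sub_C_of_isUnit_sub (by simpa using sub_ne_zero_of_ne hcd)).pow
  have hdvd : (X - C c) ^ (r + 1) * (X - C d) ^ (s + 1) ∣ D := hcop.mul_dvd d1 d2
  have := Polynomial.natDegree_le_of_dvd hdvd hD
  rw [natDegree_mul (pow_ne_zero _ (X_sub_C_ne_zero c)) (pow_ne_zero _ (X_sub_C_ne_zero d)),
    natDegree_pow, natDegree_pow, natDegree_X_sub_C, natDegree_X_sub_C] at this
  omega

lemma error_rep (r s : ℕ) (a b : ℝ) (hab : a ≠ b) (f : ℝ → ℝ)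
    (hf : f = fun x => x ^ (r + s + 2)) (P : Polynomial ℝ)
    (hdeg : P.natDegree ≤ r + s + 1)
    (hPa : ∀ j ≤ r, iteratedDeriv j (fun t => P.eval t) a = iteratedDeriv j f a)
    (hPb : ∀ j ≤ s, iteratedDeriv j (fun t => P.eval t) b = iteratedDeriv j f b)
    (x : ℝ) : f x - P.eval x = (x - a) ^ (r + 1) * (x - b) ^ (s + 1) := by
  set F : Polynomial ℝ := X ^ (r + s + 2) with hF
  set W : Polynomial ℝ := (X - C a) ^ (r + 1) * (X - C b) ^ (s + 1) with hW
  have hfF : f = fun t => F.eval t := by simp [hF, hf]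
  have hWmonic : W.Monic := ((monic_X_sub_C a).pow _).mul ((monic_X_sub_C b).pow _)
  have hFmonic : F.Monic := monic_X_pow _
  have hWdeg : W.natDegree = r + s + 2 := by
    rw [hW, natDegree_mul (pow_ne_zero _ (X_sub_C_ne_zero a)) (pow_ne_zero _ (X_sub_C_ne_zero b)),
      natDegree_pow, natDegree_pow, natDegree_X_sub_C, natDegree_X_sub_C]
    ring
  have hFdeg : F.natDegree = r + s + 2 := natDegree_X_pow _
  have hFW : (F - W).natDegree ≤ r + s + 1 := by
    by_cases h0 : F - W = 0
    · simp [h0]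
    · have hlt : (F - W).degree < F.degree :=
        degree_sub_lt (by rw [degree_eq_natDegree hFmonic.ne_zero, degree_eq_natDegree hWmonic.ne_zero, hFdeg, hWdeg])
          hFmonic.ne_zero (by rw [hFmonic.leadingCoeff, hWmonic.leadingCoeff])
      have := (natDegree_lt_natDegree_iff h0).mpr hlt
      omega
  have hWroot_a : ∀ j ≤ r, (derivative^[j] W).eval a = 0 := by
    intro j hj
    apply isRoot_iterate_derivative_of_lt_rootMultiplicity (n := j)
    rw [hW, rootMultiplicity_mul (hWmonic.ne_zero ∘ (hW ▸ ·)), rootMultiplicity_X_sub_C_pow]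
    omega
  have hWroot_b : ∀ j ≤ s, (derivative^[j] W).eval b = 0 := by
    intro j hj
    apply isRoot_iterate_derivative_of_lt_rootMultiplicity (n := j)
    rw [hW, rootMultiplicity_mul (hWmonic.ne_zero ∘ (hW ▸ ·)), rootMultiplicity_X_sub_C_pow]
    omega
  have hkey : F - P - W = 0 := by
    apply hermite_unique a b hab r s
    · calc (F - P - W).natDegree = ((F - W) - P).natDegree := by ring_nf
        _ ≤ max (r + s + 1) (r + s + 1) := natDegree_sub_le_of_le hFW hdeg
        _ = r + s + 1 := by omega
    · intro j hj
      have h1 := hPa j hj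
      rw [iterDeriv_poly, hfF, iterDeriv_poly] at h1
      simp only [iterate_derivative_sub, eval_sub]
      simp at h1
      rw [h1, hWroot_a j hj]
      ring
    · intro j hj
      have h1 := hPb j hj
      rw [iterDeriv_poly, hfF, iterDeriv_poly] at h1
      simp only [iterate_derivative_sub, eval_sub]
      simp at h1
      rw [h1, hWroot_b j hj]
      ring
  have : F = P + W := by linear_combination (norm := ring_nf) hkey
  have := congrArg (Polynomial.eval x) this
  simp only [eval_add, eval_mul, eval_pow, eval_sub, eval_X, eval_C, hF] at this ⊢
  rw [hf]
  simp only []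
  have hWeval : Polynomial.eval x W = (x - a) ^ (r + 1) * (x - b) ^ (s + 1) := by simp [hW]
  linarith [this, hWeval]

lemma key_alg (k m : ℕ) (u v : ℝ) (hu : 0 < u) (hv : 0 < v) :
    (u ^ (m + k + 1 + 1) * (-v) ^ (m + 1)
      = (-1 : ℝ) ^ (k + 1) * (u ^ (m + 1) * (-v) ^ (m + k + 1 + 1))) ↔ u = v := by
  have hsign : ((-1 : ℝ)) ^ (k + 1) * (-1) ^ (m + k + 1 + 1) = (-1) ^ (m + 1) := by
    rw [← pow_add, show (k + 1) + (m + k + 1 + 1) = (m + 1) + 2 * (k + 1) by ring,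
      pow_add, pow_mul]
    norm_num
  rw [neg_pow, neg_pow]
  constructor
  · intro h
    have h2 : ((-1 : ℝ)) ^ (m + 1) * (u ^ (m + k + 1 + 1) * v ^ (m + 1))
        = (-1) ^ (m + 1) * (u ^ (m + 1) * v ^ (m + k + 1 + 1)) := by
      linear_combination h + (u ^ (m + 1) * v ^ (m + k + 1 + 1)) * hsign
    have key := mul_left_cancel₀ (pow_ne_zero _ (neg_ne_zero.mpr (one_ne_zero (α := ℝ)))) h2
    have h3 : (u ^ (m + 1) * v ^ (m + 1)) * u ^ (k + 1)
        = (u ^ (m + 1) * v ^ (m + 1)) * v ^ (k + 1) := by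
      linear_combination key
    have h4 := mul_left_cancel₀ (by positivity : (u ^ (m+1) * v ^ (m+1) : ℝ) ≠ 0) h3
    exact (pow_left_inj₀ hu.le hv.le (by omega)).mp h4
  · intro h
    subst h
    linear_combination (-(u ^ (m + 1) * u ^ (m + k + 1 + 1))) * hsign

theorem stmt6 (m₁ m₂ : ℕ) (hm : m₂ < m₁) (a b : ℝ) (ha : 0 < a) (hab : a < b)
    (f : ℝ → ℝ) (hfdef : f = fun x => x ^ (m₁ + m₂ + 2))
    (P Q : Polynomial ℝ) (hPdeg : P.natDegree ≤ m₁ + m₂ + 1) (hQdeg : Q.natDegree ≤ m₁ + m₂ + 1)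
    (hPa : ∀ j ≤ m₁, iteratedDeriv j (fun t => P.eval t) a = iteratedDeriv j f a)
    (hPb : ∀ j ≤ m₂, iteratedDeriv j (fun t => P.eval t) b = iteratedDeriv j f b)
    (hQa : ∀ j ≤ m₂, iteratedDeriv j (fun t => Q.eval t) a = iteratedDeriv j f a)
    (hQb : ∀ j ≤ m₁, iteratedDeriv j (fun t => Q.eval t) b = iteratedDeriv j f b) :
    ∀ x ∈ Set.Ioo a b,
      (f x - P.eval x = (-1 : ℝ) ^ (m₁ - m₂) * (f x - Q.eval x) ↔ x = (a + b) / 2) := by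
  intro x hx
  obtain ⟨hax, hxb⟩ := hx
  obtain ⟨k, rfl⟩ : ∃ k, m₁ = m₂ + k + 1 := ⟨m₁ - m₂ - 1, by omega⟩
  have hab' : a ≠ b := ne_of_lt hab
  have EP := error_rep (m₂ + k + 1) m₂ a b hab' f hfdef P hPdeg hPa hPb x
  have hf2 : f = fun x => x ^ (m₂ + (m₂ + k + 1) + 2) := by
    rw [hfdef, show m₂ + (m₂ + k + 1) + 2 = m₂ + k + 1 + m₂ + 2 by ring]
  have EQ := error_rep m₂ (m₂ + k + 1) a b hab' f hf2 Q (by omega) hQa hQb x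
  have hsub : m₂ + k + 1 - m₂ = k + 1 := by omega
  rw [EP, EQ, hsub, show x - b = -(b - x) by ring,
    key_alg k m₂ (x - a) (b - x) (sub_pos.mpr hax) (sub_pos.mpr hxb)]
  constructor <;> intro h <;> linarith
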